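/- A degenerate point of the offset family is not in the closure of the interior: if p ∈ ∂P_t and there exist δ > 0 such that for all ε > 0, P_{t+ε} contains no point within distance δ of p, and if P is convex, then no such degenerate point exists for t strictly less than the vanishing time t* = max { s : P_s ≠ ∅ }. -/

import Mathlib

open Metric Set

/-- A segment from a point of `P` to a point outside `P` meets the frontier. -/
lemma seg_cross_frontier {E : Type*} [NormedAddCommGroup E] [NormedSpace ℝ E]
    {P : Set E} {a y : E} (ha : a ∈ P) (hy : y ∉ P) :
    ∃ z ∈ segment ℝ a y, z ∈ frontier P := by
  by_contra h
  push_neg at h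
  have hsub : segment ℝ a y ⊆ interior P ∪ (closure P)ᶜ := by
    intro z hz
    rcases em (z ∈ closure P) with hc | hc
    · rcases (closure_eq_interior_union_frontier P ▸ hc) with h1 | h1
      · exact Or.inl h1
      · exact absurd h1 (h z hz)
    · exact Or.inr hc
  have hdisj : Disjoint (interior P) (closure P)ᶜ :=
    disjoint_compl_right.mono_left interior_subset_closure
  rcases (convex_segment a y).isPreconnected.subset_or_subset isOpen_interior
      isClosed_closure.isOpen_compl hdisj hsub with hs | hs
  · exact hy (interior_subset (hs (right_mem_segment ℝ a y)))
  · exact (hs (left_mem_segment ℝ a y)) (subset_closure ha)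

/-- In a closed set, the closed ball of radius `infDist x (frontier P)` is contained in `P`. -/
lemma closedBall_subset_of_infDist {E : Type*} [NormedAddCommGroup E] [NormedSpace ℝ E]
    {P : Set E} (hcl : IsClosed P) {x : E} (hx : x ∈ P) {r : ℝ}
    (hr : r ≤ Metric.infDist x (frontier P)) : Metric.closedBall x r ⊆ P := by
  have hball : Metric.ball x r ⊆ P := by
    intro y hy
    by_contra hyP
    obtain ⟨z, hzseg, hzF⟩ := seg_cross_frontier hx hyP
    have hrpos : 0 < r := lt_of_le_of_lt dist_nonneg (mem_ball.mp hy)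
    have hzball : z ∈ Metric.ball x r :=
      (convex_ball x r).segment_subset (mem_ball_self hrpos) hy hzseg
    have h1 : Metric.infDist x (frontier P) ≤ dist x z := infDist_le_dist_of_mem hzF
    have h2 : dist z x < r := mem_ball.mp hzball
    rw [dist_comm] at h1
    linarith
  rcases lt_trichotomy r 0 with h0 | h0 | h0
  · simp [Metric.closedBall_eq_empty.2 h0]
  · subst h0; simpa using hx
  · calc Metric.closedBall x r = closure (Metric.ball x r) := (closure_ball x h0.ne').symm
      _ ⊆ closure P := closure_mono hball
      _ = P := hcl.closure_eq

/-- Let `P ⊆ ℝ³` be compact, convex, with nonempty interior, and let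
`P_t = {x ∈ P : d(x, ∂P) ≥ t}` (distance in the fixed ambient norm). A degenerate
point of `P_t` is `p ∈ ∂P_t` such that for some `δ > 0`, every `P_{t+ε}` (`ε > 0`)
misses the ball `B(p, δ)`. Claim: for convex `P` and `0 ≤ t < t*`, where `t*` is the
vanishing time (the greatest `s` with `P_s ≠ ∅`), `P_t` has no degenerate points. -/
theorem stmt16 (P : Set (Fin 3 → ℝ)) (hPc : IsCompact P) (hPconv : Convex ℝ P)
    (hPint : (interior P).Nonempty)
    (Pt : ℝ → Set (Fin 3 → ℝ))
    (hPt : ∀ t, Pt t = {x ∈ P | t ≤ Metric.infDist x (frontier P)})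
    (tstar : ℝ) (htstar : IsGreatest {s : ℝ | (Pt s).Nonempty} tstar)
    (t : ℝ) (ht : 0 ≤ t) (hlt : t < tstar) :
    ¬ ∃ p, p ∈ frontier (Pt t) ∧
        ∃ δ > 0, ∀ ε > 0, Pt (t + ε) ∩ Metric.ball p δ = ∅ := by
  rintro ⟨p, hpf, δ, hδ, hmiss⟩
  have hPcl : IsClosed P := hPc.isClosed
  set F := frontier P with hF
  have hFne : F.Nonempty := by
    rw [hF, nonempty_frontier_iff]
    exact ⟨hPint.mono interior_subset, hPc.ne_univ⟩
  -- Pt t is closed, so p ∈ Pt t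
  have hPtclosed : IsClosed (Pt t) := by
    rw [hPt]
    exact hPcl.inter (isClosed_le continuous_const (continuous_infDist_pt F))
  have hp : p ∈ Pt t := hPtclosed.closure_eq ▸ frontier_subset_closure hpf
  rw [hPt] at hp
  obtain ⟨hpP, hpd⟩ := hp
  obtain ⟨q, hq⟩ := htstar.1
  rw [hPt] at hq
  obtain ⟨hqP, hqd⟩ := hq
  -- choose a small λ
  set d : ℝ := dist p q with hd
  have hdnn : 0 ≤ d := dist_nonneg
  set lam : ℝ := min (1/2) (δ / (2 * (d + 1))) with hlam
  have hlampos : 0 < lam := lt_min (by norm_num) (div_pos hδ (by linarith))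
  have hlamle : lam ≤ 1 := le_trans (min_le_left _ _) (by norm_num)
  set c : Fin 3 → ℝ := (1 - lam) • p + lam • q with hc
  set r : ℝ := Metric.infDist p F with hr
  set s : ℝ := Metric.infDist q F with hs
  set m : ℝ := (1 - lam) * r + lam * s with hm
  have hrt : t ≤ r := hpd
  have hst : tstar ≤ s := hqd
  have hmpos : 0 < m := by
    have : 0 < lam * s := mul_pos hlampos (by linarith)
    have h1 : 0 ≤ (1 - lam) * r := mul_nonneg (by linarith) (by linarith)
    linarith
  -- closedBall c m ⊆ P
  have hcb : Metric.closedBall c m ⊆ P := by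
    intro y hy
    set v : Fin 3 → ℝ := y - c with hv
    have hvle : ‖v‖ ≤ m := by
      rw [hv, ← dist_eq_norm]
      exact Metric.mem_closedBall.mp hy
    have hp1 : p + (r / m) • v ∈ P := by
      apply closedBall_subset_of_infDist hPcl hpP (le_refl r)
      rw [Metric.mem_closedBall, dist_eq_norm]
      have : p + (r / m) • v - p = (r / m) • v := by abel
      rw [this, norm_smul, Real.norm_eq_abs, abs_of_nonneg
        (div_nonneg (by linarith) hmpos.le)]
      calc r / m * ‖v‖ ≤ r / m * m :=
            mul_le_mul_of_nonneg_left hvle (div_nonneg (by linarith) hmpos.le)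
        _ = r := by field_simp
    have hq1 : q + (s / m) • v ∈ P := by
      apply closedBall_subset_of_infDist hPcl hqP (le_refl s)
      rw [Metric.mem_closedBall, dist_eq_norm]
      have : q + (s / m) • v - q = (s / m) • v := by abel
      rw [this, norm_smul, Real.norm_eq_abs, abs_of_nonneg
        (div_nonneg (by linarith) hmpos.le)]
      calc s / m * ‖v‖ ≤ s / m * m :=
            mul_le_mul_of_nonneg_left hvle (div_nonneg (by linarith) hmpos.le)
        _ = s := by field_simp
    have hcoef : (1 - lam) * (r / m) + lam * (s / m) = 1 := by
      field_simp
      exact hm.symm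
    have hconv := hPconv hp1 hq1 (by linarith : (0:ℝ) ≤ 1 - lam) hlampos.le
      (by ring : (1 - lam) + lam = 1)
    have hrw : (1 - lam) • (p + (r / m) • v) + lam • (q + (s / m) • v) = y := by
      have h1 : (1 - lam) • (p + (r / m) • v) + lam • (q + (s / m) • v)
          = ((1 - lam) • p + lam • q) + (((1 - lam) * (r / m)) • v + (lam * (s / m)) • v) := by
        simp only [smul_add, smul_smul]; abel
      rw [h1, ← add_smul, hcoef, one_smul, ← hc, hv]
      abel
    rwa [hrw] at hconv
  -- so infDist c F ≥ m
  have hcd : m ≤ Metric.infDist c F := by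
    by_contra hcon
    push_neg at hcon
    obtain ⟨z, hzF, hzd⟩ := (Metric.infDist_lt_iff hFne).mp hcon
    have hzball : z ∈ Metric.ball c m := by rwa [Metric.mem_ball, dist_comm]
    have hzint : z ∈ interior P :=
      interior_maximal (le_trans Metric.ball_subset_closedBall hcb) Metric.isOpen_ball hzball
    exact hzF.2 hzint
  -- c belongs to Pt (t + ε) with ε = lam * (tstar - t)
  set ε : ℝ := lam * (tstar - t) with hε
  have hεpos : 0 < ε := mul_pos hlampos (by linarith)
  have hcPt : c ∈ Pt (t + ε) := by
    rw [hPt]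
    refine ⟨hPconv hpP hqP (by linarith) hlampos.le (by ring), ?_⟩
    have : t + ε ≤ m := by
      rw [hm, hε]
      nlinarith [hlampos.le, hlamle]
    linarith
  -- c is within δ of p
  have hcp : dist c p < δ := by
    have h1 : c - p = lam • (q - p) := by rw [hc]; module
    have h2 : dist c p = lam * d := by
      rw [dist_eq_norm, h1, norm_smul, Real.norm_eq_abs, abs_of_pos hlampos,
        hd, dist_comm, dist_eq_norm]
    have h3 : lam ≤ δ / (2 * (d + 1)) := min_le_right _ _
    have h4 : lam * d ≤ δ / (2 * (d + 1)) * d :=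
      mul_le_mul_of_nonneg_right h3 hdnn
    have h5 : δ / (2 * (d + 1)) * d < δ := by
      rw [div_mul_eq_mul_div, div_lt_iff₀ (by linarith)]
      nlinarith
    linarith [h2 ▸ (h4.trans_lt h5)]
  exact absurd (hmiss ε hεpos)
    (Set.nonempty_iff_ne_empty.mp ⟨c, hcPt, Metric.mem_ball.mpr hcp⟩)
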